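/- Combining the CRT reconstruction: let p_1,...,p_N ≥ 2 be pairwise coprime with product P, q_i the inverse of P/p_i mod p_i, A' ∈ ℤ^{m×k}, B' ∈ ℤ^{k×n} with 2·Σ_h |a'_{ih}||b'_{hj}| < P for all i,j. Define C' := Σ_{i=1}^N (P/p_i)·q_i·(rmod(A',p_i)·rmod(B',p_i)) (entrywise rmod, integer matrix products) and C'' := rmod(C', P) entrywise. Then C'' = A'·B'. -/

import Mathlib

/-- symmetric (round-to-nearest) remainder -/
def rmod (x : ℤ) (p : ℤ) : ℤ := x - p * round ((x : ℚ) / p)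

lemma rmod_modEq (x pp : ℤ) : rmod x pp ≡ x [ZMOD pp] :=
  Int.modEq_iff_dvd.mpr ⟨round ((x : ℚ) / pp), by simp [rmod]⟩

lemma sum_modEq {α : Type*} {s : Finset α} {f g : α → ℤ} {n : ℤ}
    (h : ∀ i ∈ s, f i ≡ g i [ZMOD n]) :
    (∑ i ∈ s, f i) ≡ (∑ i ∈ s, g i) [ZMOD n] := by
  rw [Int.modEq_iff_dvd, ← Finset.sum_sub_distrib]
  exact Finset.dvd_sum fun i hi => Int.ModEq.dvd (h i hi)

lemma two_abs_rmod_le {x P : ℤ} (hP : 0 < P) : 2 * |rmod x P| ≤ P := by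
  have h1 : |(x : ℚ) / P - round ((x : ℚ) / P)| ≤ 1 / 2 := abs_sub_round _
  have hP' : (0 : ℚ) < P := by exact_mod_cast hP
  have h2 : ((rmod x P : ℤ) : ℚ) = P * ((x : ℚ) / P - round ((x : ℚ) / P)) := by
    push_cast [rmod]
    field_simp
  have h3 : 2 * |((rmod x P : ℤ) : ℚ)| ≤ (P : ℚ) := by
    rw [h2, abs_mul, abs_of_pos hP']
    nlinarith [abs_nonneg ((x : ℚ) / P - round ((x : ℚ) / P))]
  exact_mod_cast h3

theorem ozaki_scheme_II_correct {m k n N : ℕ}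
    (p q : Fin N → ℤ)
    (hp : ∀ i, 2 ≤ p i)
    (hco : ∀ i j, i ≠ j → IsCoprime (p i) (p j))
    (P : ℤ) (hP : P = ∏ i, p i)
    (hq : ∀ i, (P / p i) * q i ≡ 1 [ZMOD p i])
    (A' : Matrix (Fin m) (Fin k) ℤ) (B' : Matrix (Fin k) (Fin n) ℤ)
    (hbound : ∀ i j, 2 * ∑ h, |A' i h| * |B' h j| < P)
    (C' : Matrix (Fin m) (Fin n) ℤ)
    (hC' : C' = ∑ i, ((P / p i) * q i) •
      ((Matrix.of fun a b => rmod (A' a b) (p i)) *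
       (Matrix.of fun a b => rmod (B' a b) (p i))))
    (C'' : Matrix (Fin m) (Fin n) ℤ)
    (hC'' : C'' = Matrix.of fun a b => rmod (C' a b) P) :
    C'' = A' * B' := by
  have hppos : ∀ i, (0 : ℤ) < p i := fun i => lt_of_lt_of_le (by norm_num) (hp i)
  have hPpos : 0 < P := by
    rw [hP]; exact Finset.prod_pos fun i _ => hppos i
  have hdiv : ∀ i, P / p i = ∏ l ∈ Finset.univ.erase i, p l := by
    intro i
    rw [hP, ← Finset.mul_prod_erase _ _ (Finset.mem_univ i),
      Int.mul_ediv_cancel_left _ (hppos i).ne']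
  ext a b
  -- C' a b is congruent to (A' * B') a b modulo each p j
  have hmod : ∀ j, C' a b ≡ (A' * B') a b [ZMOD p j] := by
    intro j
    rw [hC', Matrix.sum_apply]
    simp only [Matrix.smul_apply, Matrix.mul_apply, Matrix.of_apply, smul_eq_mul]
    rw [← Finset.add_sum_erase _ _ (Finset.mem_univ j)]
    have hz : ∑ i ∈ Finset.univ.erase j,
        ((P / p i) * q i) * ∑ h, rmod (A' a h) (p i) * rmod (B' h b) (p i)
        ≡ 0 [ZMOD p j] := by
      have h0 : (∑ i ∈ Finset.univ.erase j, (0 : ℤ)) = 0 := by simp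
      rw [← h0]
      refine sum_modEq fun i hi => ?_
      have hij : j ≠ i := (Finset.ne_of_mem_erase hi).symm
      have hd : p j ∣ P / p i := by
        rw [hdiv i]
        exact Finset.dvd_prod_of_mem _ (Finset.mem_erase.mpr ⟨hij, Finset.mem_univ j⟩)
      simpa using (Int.modEq_zero_iff_dvd.mpr (hd.mul_right (q i))).mul_right
        (∑ h, rmod (A' a h) (p i) * rmod (B' h b) (p i))
    have hjterm : ((P / p j) * q j) *
        (∑ h, rmod (A' a h) (p j) * rmod (B' h b) (p j))
        ≡ (A' * B') a b [ZMOD p j] := by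
      have hM : (∑ h, rmod (A' a h) (p j) * rmod (B' h b) (p j))
          ≡ (A' * B') a b [ZMOD p j] := by
        rw [Matrix.mul_apply]
        exact sum_modEq fun h _ => (rmod_modEq _ _).mul (rmod_modEq _ _)
      calc ((P / p j) * q j) * (∑ h, rmod (A' a h) (p j) * rmod (B' h b) (p j))
          ≡ 1 * ((A' * B') a b) [ZMOD p j] := (hq j).mul hM
        _ = (A' * B') a b := one_mul _
    simpa [Matrix.mul_apply] using hjterm.add hz
  have hPdvd : P ∣ C'' a b - (A' * B') a b := by
    have h1 : C'' a b ≡ C' a b [ZMOD P] := by rw [hC'']; exact rmod_modEq _ _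
    have h2 : C' a b ≡ (A' * B') a b [ZMOD P] := by
      rw [hP]
      refine Int.modEq_iff_dvd.mpr (Finset.prod_dvd_of_coprime
        (fun i _ j _ hij => hco i j hij) fun j _ => ?_)
      exact Int.ModEq.dvd (hmod j)
    exact ((h1.trans h2).symm).dvd
  have habs : |C'' a b - (A' * B') a b| < P := by
    have hb1 : 2 * |C'' a b| ≤ P := by
      rw [hC'']; exact two_abs_rmod_le hPpos
    have hb2 : 2 * |(A' * B') a b| < P := by
      have h3 : |(A' * B') a b| ≤ ∑ h, |A' a h| * |B' h b| := by
        rw [Matrix.mul_apply]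
        calc |∑ h, A' a h * B' h b| ≤ ∑ h, |A' a h * B' h b| :=
              Finset.abs_sum_le_sum_abs _ _
          _ = ∑ h, |A' a h| * |B' h b| := by simp [abs_mul]
      have := hbound a b
      omega
    have := abs_sub_abs_le_abs_sub (C'' a b) ((A' * B') a b)
    have htri := abs_sub (C'' a b) ((A' * B') a b)
    omega
  have := Int.eq_zero_of_abs_lt_dvd hPdvd habs
  omega
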